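/- arXiv:2202.10070 — 2 statements merged into one kernel-verified Lean document; each statement's English description precedes it below -/
import Mathlib

section
/- Let θ(t) = 1/(t^4 (T-t)^4) for t ∈ (0,T). Then |θ''(t)| ≤ 80 (T/2)^6 θ(t)^2 for all t ∈ (0,T). -/
open Set

theorem theta_second_deriv_bound' (T : ℝ) (hT : 0 < T)
    (θ : ℝ → ℝ) (hθ : ∀ t ∈ Ioo 0 T, θ t = 1 / (t ^ 4 * (T - t) ^ 4)) :
    ∀ t ∈ Ioo 0 T, |deriv (deriv θ) t| ≤ 80 * (T / 2) ^ 6 * (θ t) ^ 2 := by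
  set f : ℝ → ℝ := fun s => (s ^ 4 * (T - s) ^ 4)⁻¹ with hf
  set F1 : ℝ → ℝ := fun s => (4 * s ^ 4 * (T - s) ^ 3 - 4 * s ^ 3 * (T - s) ^ 4) /
      (s ^ 4 * (T - s) ^ 4) ^ 2 with hF1def
  have hne : ∀ s ∈ Ioo 0 T, s ^ 4 * (T - s) ^ 4 ≠ 0 := by
    intro s hs
    have h1 : (0:ℝ) < s := hs.1
    have h2 : (0:ℝ) < T - s := sub_pos.mpr hs.2
    positivity
  have hD : ∀ s : ℝ, HasDerivAt (fun x => x ^ 4 * (T - x) ^ 4)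
      (4 * s ^ 3 * (T - s) ^ 4 + s ^ 4 * (4 * (T - s) ^ 3 * (-1))) s := by
    intro s
    have h1 : HasDerivAt (fun x : ℝ => x ^ 4) (4 * s ^ 3) s := by
      simpa using hasDerivAt_pow 4 s
    have h2 : HasDerivAt (fun x : ℝ => (T - x) ^ 4) (4 * (T - s) ^ 3 * (-1)) s := by
      have := ((hasDerivAt_id s).const_sub T).fun_pow 4
      simpa using this
    simpa [mul_comm] using h1.fun_mul h2
  have hF1 : ∀ s ∈ Ioo 0 T, HasDerivAt f (F1 s) s := by
    intro s hs
    have := (hD s).fun_inv (hne s hs)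
    refine this.congr_deriv ?_
    rw [hF1def]
    ring
  have hdθ : ∀ s ∈ Ioo 0 T, deriv θ s = F1 s := by
    intro s hs
    have heq : θ =ᶠ[nhds s] f := by
      filter_upwards [isOpen_Ioo.mem_nhds hs] with x hx
      rw [hθ x hx, hf, one_div]
    rw [heq.deriv_eq, (hF1 s hs).deriv]
  intro t ht
  obtain ⟨ht0, htT⟩ := ht
  have htT' : (0:ℝ) < T - t := sub_pos.mpr htT
  -- second derivative
  have hN : HasDerivAt (fun s => 4 * s ^ 4 * (T - s) ^ 3 - 4 * s ^ 3 * (T - s) ^ 4)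
      ((16 * t ^ 3 * (T - t) ^ 3 + 4 * t ^ 4 * (3 * (T - t) ^ 2 * (-1))) -
       (12 * t ^ 2 * (T - t) ^ 4 + 4 * t ^ 3 * (4 * (T - t) ^ 3 * (-1)))) t := by
    have h1 : HasDerivAt (fun x : ℝ => 4 * x ^ 4) (16 * t ^ 3) t := by
      have := (hasDerivAt_pow 4 t).const_mul (4:ℝ)
      exact this.congr_deriv (by ring)
    have h2 : HasDerivAt (fun x : ℝ => (T - x) ^ 3) (3 * (T - t) ^ 2 * (-1)) t := by
      have := ((hasDerivAt_id t).const_sub T).fun_pow 3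
      simpa using this
    have h3 : HasDerivAt (fun x : ℝ => 4 * x ^ 3) (12 * t ^ 2) t := by
      have := (hasDerivAt_pow 3 t).const_mul (4:ℝ)
      exact this.congr_deriv (by ring)
    have h4 : HasDerivAt (fun x : ℝ => (T - x) ^ 4) (4 * (T - t) ^ 3 * (-1)) t := by
      have := ((hasDerivAt_id t).const_sub T).fun_pow 4
      simpa using this
    exact (h1.mul h2).sub (h3.mul h4)
  have hDen : HasDerivAt (fun s => (s ^ 4 * (T - s) ^ 4) ^ 2)
      (2 * (t ^ 4 * (T - t) ^ 4) ^ 1 *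
        (4 * t ^ 3 * (T - t) ^ 4 + t ^ 4 * (4 * (T - t) ^ 3 * (-1)))) t :=
    (hD t).pow 2
  have hDenne : ((t ^ 4 * (T - t) ^ 4) ^ 2) ≠ 0 := pow_ne_zero 2 (hne t ⟨ht0, htT⟩)
  have hF1' : HasDerivAt F1
      ((((16 * t ^ 3 * (T - t) ^ 3 + 4 * t ^ 4 * (3 * (T - t) ^ 2 * (-1))) -
       (12 * t ^ 2 * (T - t) ^ 4 + 4 * t ^ 3 * (4 * (T - t) ^ 3 * (-1)))) *
        ((t ^ 4 * (T - t) ^ 4) ^ 2) -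
       (4 * t ^ 4 * (T - t) ^ 3 - 4 * t ^ 3 * (T - t) ^ 4) *
        (2 * (t ^ 4 * (T - t) ^ 4) ^ 1 *
          (4 * t ^ 3 * (T - t) ^ 4 + t ^ 4 * (4 * (T - t) ^ 3 * (-1))))) /
        ((t ^ 4 * (T - t) ^ 4) ^ 2) ^ 2) t := hN.div hDen hDenne
  have key : deriv (deriv θ) t =
      (20 * (T - t) ^ 2 - 32 * t * (T - t) + 20 * t ^ 2) / (t ^ 6 * (T - t) ^ 6) := by
    have heq2 : deriv θ =ᶠ[nhds t] F1 := by
      filter_upwards [isOpen_Ioo.mem_nhds (⟨ht0, htT⟩ : t ∈ Ioo 0 T)] with s hs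
      exact hdθ s hs
    rw [heq2.deriv_eq, hF1'.deriv]
    have h1 : t ≠ 0 := ne_of_gt ht0
    have h2 : T - t ≠ 0 := ne_of_gt htT'
    field_simp
    ring
  rw [key, hθ t ⟨ht0, htT⟩]
  have hnum : (0:ℝ) ≤ 20 * (T - t) ^ 2 - 32 * t * (T - t) + 20 * t ^ 2 := by
    nlinarith [sq_nonneg (T - 2 * t), sq_nonneg (t - (T - t))]
  have hden : (0:ℝ) < t ^ 6 * (T - t) ^ 6 := by positivity
  rw [abs_of_nonneg (div_nonneg hnum hden.le)]
  rw [div_le_iff₀ hden]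
  have h1 : t ≠ 0 := ne_of_gt ht0
  have h2 : T - t ≠ 0 := ne_of_gt htT'
  have expand : 80 * (T / 2) ^ 6 * (1 / (t ^ 4 * (T - t) ^ 4)) ^ 2 * (t ^ 6 * (T - t) ^ 6)
      = 5 / 4 * T ^ 6 / (t ^ 2 * (T - t) ^ 2) := by
    field_simp
    ring
  rw [expand, le_div_iff₀ (by positivity)]
  nlinarith [mul_nonneg (mul_nonneg (sq_nonneg (T - 2 * t)) (sq_nonneg T))
      (by nlinarith [mul_pos ht0 htT'] : (0:ℝ) ≤ T ^ 2 / 4 + t * (T - t)),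
    pow_pos (mul_pos ht0 htT') 3, mul_pos ht0 htT', sq_nonneg (T - 2 * t)]
end

section
/- Suppose X, Y, Z are Hilbert spaces with Y separable, F : X → Z and G : Y → Z bounded linear operators, and there is C > 0 such that ‖F* z‖ ≤ C ‖G* z‖ for all z ∈ Z. Then for every x ∈ X there exists y ∈ Y with F x = G y; i.e., range F ⊆ range G. -/
open ContinuousLinearMap

theorem range_inclusion
    {X Y Z : Type*}
    [NormedAddCommGroup X] [InnerProductSpace ℝ X] [CompleteSpace X]
    [NormedAddCommGroup Y] [InnerProductSpace ℝ Y] [CompleteSpace Y]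
    [NormedAddCommGroup Z] [InnerProductSpace ℝ Z] [CompleteSpace Z]
    [TopologicalSpace.SeparableSpace Y]
    (F : X →L[ℝ] Z) (G : Y →L[ℝ] Z) (C : ℝ) (hC : 0 < C)
    (h : ∀ z : Z, ‖ContinuousLinearMap.adjoint F z‖ ≤ C * ‖ContinuousLinearMap.adjoint G z‖) :
    ∀ x : X, ∃ y : Y, F x = G y := by
  intro x
  set Gl : Z →ₗ[ℝ] Y := (ContinuousLinearMap.adjoint G).toLinearMap with hGl
  -- the functional z ↦ ⟪F* z, x⟫
  set ψ : Z →ₗ[ℝ] ℝ :=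
    ((innerSL ℝ x).toLinearMap).comp (ContinuousLinearMap.adjoint F).toLinearMap with hψ
  have hψ_apply : ∀ z : Z, ψ z = inner ℝ x (ContinuousLinearMap.adjoint F z) := fun z => rfl
  have hker : LinearMap.ker Gl ≤ LinearMap.ker ψ := by
    intro z hz
    have hz' : ContinuousLinearMap.adjoint G z = 0 := hz
    have h0 : ‖ContinuousLinearMap.adjoint F z‖ ≤ 0 := by
      have := h z; rw [hz'] at this; simpa using this
    have hF0 : ContinuousLinearMap.adjoint F z = 0 :=
      norm_le_zero_iff.mp h0
    simp [LinearMap.mem_ker, hψ_apply, hF0]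
  set e := LinearMap.quotKerEquivRange Gl with he
  set f₀ : (Z ⧸ LinearMap.ker Gl) →ₗ[ℝ] ℝ := (LinearMap.ker Gl).liftQ ψ hker with hf₀
  set f : LinearMap.range Gl →ₗ[ℝ] ℝ := f₀.comp e.symm.toLinearMap with hf
  have hfval : ∀ z : Z, ∀ hm : Gl z ∈ LinearMap.range Gl, f ⟨Gl z, hm⟩ = ψ z := by
    intro z hm
    have h1 : e (Submodule.Quotient.mk z) = ⟨Gl z, hm⟩ := by
      apply Subtype.ext
      simp [he, LinearMap.quotKerEquivRange_apply_mk]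
    have h2 : e.symm ⟨Gl z, hm⟩ = Submodule.Quotient.mk z := by
      rw [← h1, LinearEquiv.symm_apply_apply]
    simp [hf, h2, hf₀, Submodule.liftQ_apply]
  have hbound : ∀ u : LinearMap.range Gl, ‖f u‖ ≤ (C * ‖x‖) * ‖u‖ := by
    rintro ⟨u, hu⟩
    obtain ⟨z, hz⟩ := hu
    have hm : Gl z ∈ LinearMap.range Gl := ⟨z, rfl⟩
    have : (⟨u, hz ▸ hm⟩ : LinearMap.range Gl) = ⟨Gl z, hm⟩ := by
      apply Subtype.ext; exact hz.symm
    rw [this, hfval z hm]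
    calc ‖ψ z‖ = ‖inner ℝ x (ContinuousLinearMap.adjoint F z)‖ := by rw [hψ_apply]
      _ ≤ ‖x‖ * ‖ContinuousLinearMap.adjoint F z‖ := norm_inner_le_norm _ _
      _ ≤ ‖x‖ * (C * ‖ContinuousLinearMap.adjoint G z‖) := by
          exact mul_le_mul_of_nonneg_left (h z) (norm_nonneg x)
      _ = (C * ‖x‖) * ‖(⟨Gl z, hm⟩ : LinearMap.range Gl)‖ := by
          simp [hGl]; ring
  set fc : (LinearMap.range Gl : Submodule ℝ Y) →L[ℝ] ℝ :=
    LinearMap.mkContinuous f (C * ‖x‖) hbound with hfc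
  obtain ⟨g, hg, -⟩ := exists_extension_norm_eq (LinearMap.range Gl) fc
  -- Riesz representation
  set y := (InnerProductSpace.toDual ℝ Y).symm g with hy
  have hyval : ∀ u : Y, g u = inner ℝ y u := by
    intro u
    have := InnerProductSpace.toDual_symm_apply (𝕜 := ℝ) (x := u) (y := g)
    exact (this).symm
  refine ⟨y, ?_⟩
  have key : ∀ z : Z, (inner ℝ z (F x) : ℝ) = inner ℝ z (G y) := by
    intro z
    have hm : Gl z ∈ LinearMap.range Gl := ⟨z, rfl⟩
    have h1 : g (Gl z) = ψ z := by
      have := hg ⟨Gl z, hm⟩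
      rw [this]
      show fc ⟨Gl z, hm⟩ = ψ z
      rw [hfc, LinearMap.mkContinuous_apply, hfval z hm]
    have h2 : (inner ℝ y (Gl z) : ℝ) = inner ℝ x (ContinuousLinearMap.adjoint F z) := by
      rw [← hyval, h1, hψ_apply]
    calc (inner ℝ z (F x) : ℝ) = inner ℝ (ContinuousLinearMap.adjoint F z) x :=
          (ContinuousLinearMap.adjoint_inner_left F x z).symm
      _ = inner ℝ x (ContinuousLinearMap.adjoint F z) := real_inner_comm _ _
      _ = inner ℝ y (Gl z) := h2.symm
      _ = inner ℝ (ContinuousLinearMap.adjoint G z) y := real_inner_comm _ _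
      _ = inner ℝ z (G y) := ContinuousLinearMap.adjoint_inner_left G y z
  exact ext_inner_left ℝ key
end
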